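/- For a, b, c > 0 with c ≥ max(a,b), and for every t ∈ (0, π/2), one has a·cos t + b·sin t − c·sin t·cos t ≥ (a·sin t + b·cos t − c)/(sin t·cos t). -/
import Mathlib

open Set Real

theorem stmt15 (a b c : ℝ) (ha : 0 < a) (hb : 0 < b) (hc : max a b ≤ c) :
    ∀ t ∈ Ioo 0 (π / 2),
      (a * Real.sin t + b * Real.cos t - c) / (Real.sin t * Real.cos t) ≤
        a * Real.cos t + b * Real.sin t - c * Real.sin t * Real.cos t := by
  intro t ht
  obtain ⟨ht0, ht1⟩ := ht
  have hs : 0 < Real.sin t := Real.sin_pos_of_pos_of_lt_pi ht0 (by linarith [Real.pi_pos])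
  have hco : 0 < Real.cos t := Real.cos_pos_of_mem_Ioo ⟨by linarith [Real.pi_pos], ht1⟩
  have hs1 : Real.sin t ≤ 1 := Real.sin_le_one t
  have hco1 : Real.cos t ≤ 1 := Real.cos_le_one t
  have hpy : Real.sin t ^ 2 + Real.cos t ^ 2 = 1 := Real.sin_sq_add_cos_sq t
  have hca : a ≤ c := le_trans (le_max_left a b) hc
  have hcb : b ≤ c := le_trans (le_max_right a b) hc
  set s := Real.sin t
  set co := Real.cos t
  have hsco : s * co ≤ 1 := by nlinarith [sq_nonneg (s - co)]
  have h1 : a * s ^ 3 + b * co ^ 3 ≤ c * (s + co) * (1 - s * co) := by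
    have e : c * (s + co) * (1 - s * co) = c * (s ^ 3 + co ^ 3) := by
      linear_combination (-(c * (s + co))) * hpy
    rw [e]
    nlinarith [mul_nonneg (sub_nonneg.2 hca) (pow_pos hs 3).le,
      mul_nonneg (sub_nonneg.2 hcb) (pow_pos hco 3).le]
  have h2 : c * (s + co) * (1 - s * co) ≤ c * (1 - s * co) * (1 + s * co) := by
    nlinarith [mul_nonneg (mul_nonneg (mul_nonneg (le_trans ha.le hca)
      (sub_nonneg.2 hsco)) (sub_nonneg.2 hs1)) (sub_nonneg.2 hco1)]
  have ea : a * s - a * s * co ^ 2 = a * s ^ 3 := by linear_combination (-(a * s)) * hpy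
  have eb : b * co - b * co * s ^ 2 = b * co ^ 3 := by linear_combination (-(b * co)) * hpy
  have ec : c * (1 - s * co) * (1 + s * co) = c - c * (s * co) ^ 2 := by ring
  rw [div_le_iff₀ (by positivity)]
  nlinarith [h1, h2, ea, eb, ec]
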